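/- arXiv:2401.07515 — 2 statements merged into one kernel-verified Lean document; each statement's English description precedes it below -/
import Mathlib

section
/- Let z_1,…,z_K and ẑ_1,…,ẑ_K be real numbers, and h_1,…,h_K, ĥ_1,…,ĥ_K be nonzero reals. Suppose Σ_j h_j z_j^s = Σ_j ĥ_j ẑ_j^s for all s = 0, 1, …, 2K. Then the multisets of pairs {(z_j, h_j')} and {(ẑ_j, ĥ_j')} agree, where coefficients of equal nodes are summed: for every real t, Σ_{j : z_j = t} h_j = Σ_{j : ẑ_j = t} ĥ_j. -/
open Finset Polynomial

/-- Moment-matching uniqueness: two signed discrete measures supported on at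
most `K` points with equal moments of orders `0, …, 2K` agree: for every `t`,
the summed coefficients at node `t` coincide. -/
theorem stmt_5 {K : ℕ} (z zhat : Fin K → ℝ) (h hhat : Fin K → ℝ)
    (hnz : ∀ j, h j ≠ 0) (hnzhat : ∀ j, hhat j ≠ 0)
    (hmom : ∀ s : ℕ, s ≤ 2 * K →
      ∑ j, h j * z j ^ s = ∑ j, hhat j * zhat j ^ s) :
    ∀ t : ℝ,
      ∑ j ∈ Finset.univ.filter (fun j => z j = t), h j
        = ∑ j ∈ Finset.univ.filter (fun j => zhat j = t), hhat j := by
  classical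
  intro t
  set S : Finset ℝ := (Finset.univ.image z) ∪ (Finset.univ.image zhat) with hS
  set c : ℝ → ℝ := fun u => (∑ j ∈ Finset.univ.filter (fun j => z j = u), h j)
      - (∑ j ∈ Finset.univ.filter (fun j => zhat j = u), hhat j) with hc
  suffices hct : c t = 0 by
    simp only [hc] at hct; linarith
  have hSz : ∀ j, z j ∈ S := fun j => by
    simp [hS]
  have hSzh : ∀ j, zhat j ∈ S := fun j => by
    simp [hS]
  have hScard : S.card ≤ 2 * K := by
    calc S.card ≤ (Finset.univ.image z).card + (Finset.univ.image zhat).card :=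
          Finset.card_union_le _ _
      _ ≤ K + K := by
          have a1 : (Finset.univ.image z).card ≤ K := by
            simpa using Finset.card_image_le (s := (Finset.univ : Finset (Fin K))) (f := z)
          have a2 : (Finset.univ.image zhat).card ≤ K := by
            simpa using Finset.card_image_le (s := (Finset.univ : Finset (Fin K))) (f := zhat)
          omega
      _ = 2 * K := by ring
  -- moments of c vanish
  have key : ∀ s : ℕ, s ≤ 2 * K → ∑ u ∈ S, c u * u ^ s = 0 := by
    intro s hs
    have h1 : ∑ u ∈ S, (∑ j ∈ Finset.univ.filter (fun j => z j = u), h j) * u ^ s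
        = ∑ j, h j * z j ^ s := by
      rw [← Finset.sum_fiberwise_of_maps_to (g := z) (fun j _ => hSz j)
          (fun j => h j * z j ^ s)]
      refine Finset.sum_congr rfl fun u hu => ?_
      rw [Finset.sum_mul]
      refine Finset.sum_congr rfl fun j hj => ?_
      have : z j = u := by simpa using (Finset.mem_filter.mp hj).2
      rw [this]
    have h2 : ∑ u ∈ S, (∑ j ∈ Finset.univ.filter (fun j => zhat j = u), hhat j) * u ^ s
        = ∑ j, hhat j * zhat j ^ s := by
      rw [← Finset.sum_fiberwise_of_maps_to (g := zhat) (fun j _ => hSzh j)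
          (fun j => hhat j * zhat j ^ s)]
      refine Finset.sum_congr rfl fun u hu => ?_
      rw [Finset.sum_mul]
      refine Finset.sum_congr rfl fun j hj => ?_
      have : zhat j = u := by simpa using (Finset.mem_filter.mp hj).2
      rw [this]
    have : ∑ u ∈ S, c u * u ^ s
        = (∑ u ∈ S, (∑ j ∈ Finset.univ.filter (fun j => z j = u), h j) * u ^ s)
          - ∑ u ∈ S, (∑ j ∈ Finset.univ.filter (fun j => zhat j = u), hhat j) * u ^ s := by
      rw [← Finset.sum_sub_distrib]
      refine Finset.sum_congr rfl fun u hu => ?_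
      simp [hc, sub_mul]
    rw [this, h1, h2, hmom s hs, sub_self]
  by_contra hct
  -- t must be in S
  have htS : t ∈ S := by
    by_contra htS
    apply hct
    have e1 : Finset.univ.filter (fun j => z j = t) = ∅ := by
      refine Finset.filter_eq_empty_iff.mpr fun j _ => fun hj => htS (hj ▸ hSz j)
    have e2 : Finset.univ.filter (fun j => zhat j = t) = ∅ := by
      refine Finset.filter_eq_empty_iff.mpr fun j _ => fun hj => htS (hj ▸ hSzh j)
    simp [hc, e1, e2]
  set P : Polynomial ℝ := ∏ u ∈ S.erase t, (X - C u) with hP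
  have hPdeg : P.natDegree = (S.erase t).card := by
    rw [hP, Polynomial.natDegree_prod _ _ (fun u _ => X_sub_C_ne_zero u)]
    simp [Polynomial.natDegree_X_sub_C]
  have hcardlt : (S.erase t).card < 2 * K := by
    have := Finset.card_erase_of_mem htS
    have h1 : 1 ≤ S.card := Finset.card_pos.mpr ⟨t, htS⟩
    omega
  -- the weighted sum of P over S vanishes
  have hzero : ∑ u ∈ S, c u * P.eval u = 0 := by
    have step : ∀ u ∈ S, c u * P.eval u
        = ∑ i ∈ Finset.range (P.natDegree + 1), P.coeff i * (c u * u ^ i) := by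
      intro u hu
      rw [Polynomial.eval_eq_sum_range, Finset.mul_sum]
      exact Finset.sum_congr rfl fun i _ => by ring
    rw [Finset.sum_congr rfl step, Finset.sum_comm]
    refine Finset.sum_eq_zero fun i hi => ?_
    have hi2 : i ≤ 2 * K := by
      have := Finset.mem_range.mp hi
      omega
    rw [← Finset.mul_sum, key i hi2, mul_zero]
  -- but it equals c t * P.eval t
  have hsingle : ∑ u ∈ S, c u * P.eval u = c t * P.eval t := by
    refine Finset.sum_eq_single t (fun u hu hne => ?_) (fun habs => absurd htS habs)
    have : P.eval u = 0 := by
      rw [hP, Polynomial.eval_prod]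
      refine Finset.prod_eq_zero (Finset.mem_erase.mpr ⟨hne, hu⟩) ?_
      simp
    rw [this, mul_zero]
  have hPt : P.eval t ≠ 0 := by
    rw [hP, Polynomial.eval_prod]
    refine Finset.prod_ne_zero_iff.mpr fun u hu => ?_
    have : u ≠ t := (Finset.mem_erase.mp hu).1
    simp [sub_ne_zero]
    exact fun e => this e.symm
  rw [hsingle] at hzero
  exact hct ((mul_eq_zero.mp hzero).resolve_right hPt)
end

section
/- Define H₁ = I₂ (the 2×2 identity) and H₂ the 2×2 matrix with all entries 1/2, and y = (0,0). For any functions φ, ψ : ℝ^d → ℝ^d applied entrywise per antenna, the iterative scheme F_rx ← Φ(F_rx), F_tx ← Hᵀ F_rx, F_tx ← Ψ(F_tx), F_rx ← H F_tx initialized with F_rx = y produces identical outputs for (H₁, y) and (H₂, y) after any number of iterations. -/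
open Matrix

/-- One iteration of the per-antenna scheme:
`F_rx ← Φ(F_rx)`, `F_tx ← Hᵀ F_rx`, `F_tx ← Ψ(F_tx)`, `F_rx ← H F_tx`,
where `φ` (resp. `ψ`) is applied identically to each receive (resp. transmit)
antenna feature vector. -/
def channelStep {d : ℕ} (φ ψ : (Fin d → ℝ) → (Fin d → ℝ))
    (H : Matrix (Fin 2) (Fin 2) ℝ) (Frx : Fin 2 → Fin d → ℝ) :
    Fin 2 → Fin d → ℝ :=
  let Frx' : Fin 2 → Fin d → ℝ := fun i => φ (Frx i)
  let Ftx : Fin 2 → Fin d → ℝ := fun i k => ∑ j, Hᵀ i j * Frx' j k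
  let Ftx' : Fin 2 → Fin d → ℝ := fun i => ψ (Ftx i)
  fun i k => ∑ j, H i j * Ftx' j k

lemma channelStep_const {d : ℕ} (φ ψ : (Fin d → ℝ) → (Fin d → ℝ))
    (H : Matrix (Fin 2) (Fin 2) ℝ)
    (hrow : ∀ i, ∑ j, H i j = 1) (hcol : ∀ j, ∑ i, H i j = 1)
    (v : Fin d → ℝ) :
    channelStep φ ψ H (fun _ => v) = fun _ => ψ (φ v) := by
  funext i k
  simp only [channelStep, Matrix.transpose_apply]
  have h1 : ∀ i' : Fin 2, (fun k => ∑ j, H j i' * φ v k) = φ v := by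
    intro i'
    funext k
    rw [← Finset.sum_mul, hcol i', one_mul]
  have : (fun j : Fin 2 => ψ (fun k => ∑ j', H j' j * φ v k)) = fun _ => ψ (φ v) := by
    funext j; rw [h1 j]
  calc ∑ j, H i j * ψ (fun k => ∑ j', H j' j * φ v k) k
      = ∑ j, H i j * ψ (φ v) k := by
        refine Finset.sum_congr rfl fun j _ => ?_
        rw [h1 j]
    _ = ψ (φ v) k := by rw [← Finset.sum_mul, hrow i, one_mul]

/-- With `H₁ = I₂`, `H₂` the all-`1/2` matrix, and `y = (0,0)`, the iterative
per-antenna scheme produces identical outputs for `(H₁, y)` and `(H₂, y)`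
after any number of iterations, for any per-antenna functions `φ, ψ`. -/
theorem stmt_8 {d : ℕ} (φ ψ : (Fin d → ℝ) → (Fin d → ℝ)) (n : ℕ) :
    (channelStep φ ψ (1 : Matrix (Fin 2) (Fin 2) ℝ))^[n]
        (fun _ _ => (0 : ℝ))
      = (channelStep φ ψ (Matrix.of fun _ _ => (1 / 2 : ℝ)))^[n]
        (fun _ _ => (0 : ℝ)) := by
  have h1row : ∀ i : Fin 2, ∑ j, (1 : Matrix (Fin 2) (Fin 2) ℝ) i j = 1 := by
    intro i; simp [Matrix.one_apply, Finset.sum_ite_eq']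
  have h1col : ∀ j : Fin 2, ∑ i, (1 : Matrix (Fin 2) (Fin 2) ℝ) i j = 1 := by
    intro j; simp [Matrix.one_apply, Finset.sum_ite_eq]
  suffices h : ∀ n, ∃ v : Fin d → ℝ,
      (channelStep φ ψ (1 : Matrix (Fin 2) (Fin 2) ℝ))^[n] (fun _ _ => (0 : ℝ)) = (fun _ => v) ∧
      (channelStep φ ψ (Matrix.of fun _ _ => (1 / 2 : ℝ)))^[n] (fun _ _ => (0 : ℝ)) = (fun _ => v) by
    obtain ⟨v, hv1, hv2⟩ := h n
    rw [hv1, hv2]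
  intro m
  induction m with
  | zero => exact ⟨fun _ => 0, rfl, rfl⟩
  | succ m ih =>
    obtain ⟨v, hv1, hv2⟩ := ih
    refine ⟨ψ (φ v), ?_, ?_⟩
    · rw [Function.iterate_succ_apply', hv1, channelStep_const φ ψ _ h1row h1col]
    · rw [Function.iterate_succ_apply', hv2, channelStep_const φ ψ _ ?_ ?_]
      · intro i; simp
      · intro j; simp
end
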